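/- There exists a constant C such that for all k₁, k₂, k₃, j₁, j₂, j₃ ∈ ℕ and all nonnegative f₁, f₂, f₃ ∈ L²(ℤ² × ℝ) with supp(f_i) ⊆ D_{k_i, ≤ j_i} for i = 1, 2, 3: ∫_{ℤ² × ℝ} (f₁ * f₂) f₃ ≤ C 2^{k_min} 2^{j_min/2} ∏_{i=1}^{3} ‖f_i‖_{L²}, where k_min = min(k₁, k₂, k₃) and j_min = min(j₁, j₂, j₃). -/

import Mathlib

open MeasureTheory
open scoped ENNReal

/-- Counting measure on `ℤ²` times Lebesgue measure on `ℝ`. -/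
noncomputable def muZ : Measure ((ℤ × ℤ) × ℝ) :=
  (Measure.count : Measure (ℤ × ℤ)).prod (volume : Measure ℝ)

/-- Convolution on `ℤ² × ℝ` of nonnegative functions, valued in `ℝ≥0∞`:
`(f * g)(ζ, τ) = ∑_{ζ'} ∫ f(ζ', τ') g(ζ - ζ', τ - τ') dτ'`. -/
noncomputable def convZ (f g : (ℤ × ℤ) × ℝ → ℝ) (p : (ℤ × ℤ) × ℝ) : ℝ≥0∞ :=
  ∑' ζ : ℤ × ℤ, ∫⁻ τ : ℝ,
    ENNReal.ofReal (f (ζ, τ)) * ENNReal.ofReal (g (p.1 - ζ, p.2 - τ))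

/-- The Zakharov-Kuznetsov dispersion relation `ω(ξ,η) = ξ³ + ξη²` on `ℤ²`. -/
def omegaZK (ζ : ℤ × ℤ) : ℝ := ((ζ.1 : ℝ)) ^ 3 + (ζ.1 : ℝ) * ((ζ.2 : ℝ)) ^ 2

/-- The isotropic frequency-modulation region
`D_{k,≤j} = {(ξ,η,τ) : 2^{k-1} ≤ |(ξ,η)| < 2^k, |τ - ω(ξ,η)| ≤ 2^j}`,
with `|(ξ,η)|` the Euclidean norm. -/
noncomputable def DZ (k j : ℕ) : Set ((ℤ × ℤ) × ℝ) :=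
  {p | (2:ℝ) ^ ((k : ℤ) - 1) ≤ Real.sqrt (((p.1.1 : ℝ)) ^ 2 + ((p.1.2 : ℝ)) ^ 2) ∧
    Real.sqrt (((p.1.1 : ℝ)) ^ 2 + ((p.1.2 : ℝ)) ^ 2) < (2:ℝ) ^ (k : ℤ) ∧
    |p.2 - omegaZK p.1| ≤ (2:ℝ) ^ (j : ℤ)}


section Abstract
open scoped ENNReal
open MeasureTheory
set_option linter.unusedSectionVars false

noncomputable def L2N {α : Type*} [MeasurableSpace α] (μ : Measure α) (f : α → ℝ≥0∞) : ℝ≥0∞ :=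
  (∫⁻ x, f x ^ (2:ℝ) ∂μ) ^ ((1:ℝ)/2)

lemma csL2 {α : Type*} [MeasurableSpace α] (μ : Measure α) {f g : α → ℝ≥0∞}
    (hf : AEMeasurable f μ) (hg : AEMeasurable g μ) :
    ∫⁻ x, f x * g x ∂μ ≤ L2N μ f * L2N μ g := by
  have h := ENNReal.lintegral_mul_le_Lp_mul_Lq μ (p := 2) (q := 2)
    ⟨by norm_num, by norm_num, by norm_num⟩ hf hg
  simpa [L2N, Pi.mul_apply] using h

lemma L2N_comp {α β : Type*} [MeasurableSpace α] [MeasurableSpace β] {μ : Measure α}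
    {ν : Measure β} {φ : α → β} (hφ : MeasurePreserving φ μ ν) {f : β → ℝ≥0∞}
    (hf : Measurable f) : L2N μ (fun x => f (φ x)) = L2N ν f := by
  unfold L2N
  rw [← hφ.lintegral_comp (hf.pow_const _)]

lemma L2N_indicator {α : Type*} [MeasurableSpace α] (μ : Measure α) {S : Set α}
    (hS : MeasurableSet S) : L2N μ (S.indicator 1) = (μ S) ^ ((1:ℝ)/2) := by
  unfold L2N
  congr 1
  have h : ∀ x, (S.indicator (1 : α → ℝ≥0∞) x) ^ (2:ℝ) = S.indicator 1 x := by
    intro x; by_cases hx : x ∈ S <;> simp [hx]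
  simp_rw [h]
  rw [lintegral_indicator_one hS]

lemma lintegral_le_sqrt_mul_L2N {α : Type*} [MeasurableSpace α] (μ : Measure α)
    {f : α → ℝ≥0∞} (hf : Measurable f) {S : Set α} (hS : MeasurableSet S)
    (hsupp : ∀ x, x ∉ S → f x = 0) :
    ∫⁻ x, f x ∂μ ≤ (μ S) ^ ((1:ℝ)/2) * L2N μ f := by
  have h1 : ∀ x, f x = f x * S.indicator 1 x := by
    intro x
    by_cases hx : x ∈ S
    · simp [hx]
    · simp [hx, hsupp x hx]
  calc ∫⁻ x, f x ∂μ = ∫⁻ x, f x * S.indicator 1 x ∂μ := by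
        exact lintegral_congr h1
    _ ≤ L2N μ f * L2N μ (S.indicator 1) :=
        csL2 μ hf.aemeasurable ((measurable_one.indicator hS).aemeasurable)
    _ = (μ S) ^ ((1:ℝ)/2) * L2N μ f := by rw [L2N_indicator μ hS, mul_comm]

section Tri
variable {G : Type*} [AddCommGroup G] [MeasurableSpace G] [MeasurableSub₂ G]
  [MeasurableAdd₂ G] (μ : Measure G) [SFinite μ]
variable (hA : ∀ z : G, MeasurePreserving (fun y => z + y) μ μ)
  (hL : ∀ x : G, MeasurePreserving (fun y => x - y) μ μ)
  (hR : ∀ y : G, MeasurePreserving (fun x => x - y) μ μ)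
variable {f₁ f₂ f₃ : G → ℝ≥0∞} (h₁ : Measurable f₁) (h₂ : Measurable f₂) (h₃ : Measurable f₃)

include hL h₁ h₂ h₃ in
lemma tri3 {S : Set G} (hS : MeasurableSet S) (hs : ∀ x, x ∉ S → f₃ x = 0) :
    ∫⁻ x, (∫⁻ y, f₁ y * f₂ (x - y) ∂μ) * f₃ x ∂μ ≤
      (μ S) ^ ((1:ℝ)/2) * (L2N μ f₁ * L2N μ f₂ * L2N μ f₃) := by
  have inner : ∀ x, (∫⁻ y, f₁ y * f₂ (x - y) ∂μ) ≤ L2N μ f₁ * L2N μ f₂ := by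
    intro x
    have hc : Measurable fun y => f₂ (x - y) := h₂.comp (measurable_const.sub measurable_id)
    refine (csL2 μ h₁.aemeasurable hc.aemeasurable).trans ?_
    rw [L2N_comp (hL x) h₂]
  calc ∫⁻ x, (∫⁻ y, f₁ y * f₂ (x - y) ∂μ) * f₃ x ∂μ
      ≤ ∫⁻ x, (L2N μ f₁ * L2N μ f₂) * f₃ x ∂μ :=
        lintegral_mono fun x => mul_le_mul_left (inner x) _
    _ = (L2N μ f₁ * L2N μ f₂) * ∫⁻ x, f₃ x ∂μ := lintegral_const_mul _ h₃
    _ ≤ (L2N μ f₁ * L2N μ f₂) * ((μ S) ^ ((1:ℝ)/2) * L2N μ f₃) := by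
        gcongr
        exact lintegral_le_sqrt_mul_L2N μ h₃ hS hs
    _ = (μ S) ^ ((1:ℝ)/2) * (L2N μ f₁ * L2N μ f₂ * L2N μ f₃) := by ring

include h₁ h₂ h₃ in
lemma tri_swap :
    ∫⁻ x, (∫⁻ y, f₁ y * f₂ (x - y) ∂μ) * f₃ x ∂μ =
      ∫⁻ y, f₁ y * (∫⁻ x, f₂ (x - y) * f₃ x ∂μ) ∂μ := by
  have hm : Measurable fun z : G × G => f₁ z.2 * f₂ (z.1 - z.2) * f₃ z.1 :=
    ((h₁.comp measurable_snd).mul (h₂.comp (measurable_fst.sub measurable_snd))).mul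
      (h₃.comp measurable_fst)
  calc ∫⁻ x, (∫⁻ y, f₁ y * f₂ (x - y) ∂μ) * f₃ x ∂μ
      = ∫⁻ x, ∫⁻ y, f₁ y * f₂ (x - y) * f₃ x ∂μ ∂μ := by
        refine lintegral_congr fun x => ?_
        exact (lintegral_mul_const (f₃ x)
          (show Measurable fun y => f₁ y * f₂ (x - y) from
            h₁.mul (h₂.comp (measurable_const.sub measurable_id)))).symm
    _ = ∫⁻ y, ∫⁻ x, f₁ y * f₂ (x - y) * f₃ x ∂μ ∂μ :=
        lintegral_lintegral_swap hm.aemeasurable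
    _ = ∫⁻ y, f₁ y * (∫⁻ x, f₂ (x - y) * f₃ x ∂μ) ∂μ := by
        refine lintegral_congr fun y => ?_
        simp_rw [mul_assoc]
        exact lintegral_const_mul (f₁ y)
          (show Measurable fun x => f₂ (x - y) * f₃ x from
            (h₂.comp (measurable_id.sub measurable_const)).mul h₃)

include hR h₁ h₂ h₃ in
lemma tri1 {S : Set G} (hS : MeasurableSet S) (hs : ∀ x, x ∉ S → f₁ x = 0) :
    ∫⁻ x, (∫⁻ y, f₁ y * f₂ (x - y) ∂μ) * f₃ x ∂μ ≤
      (μ S) ^ ((1:ℝ)/2) * (L2N μ f₁ * L2N μ f₂ * L2N μ f₃) := by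
  rw [tri_swap μ h₁ h₂ h₃]
  have inner : ∀ y, (∫⁻ x, f₂ (x - y) * f₃ x ∂μ) ≤ L2N μ f₂ * L2N μ f₃ := by
    intro y
    have hc : Measurable fun x => f₂ (x - y) := h₂.comp (measurable_id.sub measurable_const)
    refine (csL2 μ hc.aemeasurable h₃.aemeasurable).trans ?_
    rw [L2N_comp (hR y) h₂]
  calc ∫⁻ y, f₁ y * (∫⁻ x, f₂ (x - y) * f₃ x ∂μ) ∂μ
      ≤ ∫⁻ y, f₁ y * (L2N μ f₂ * L2N μ f₃) ∂μ :=
        lintegral_mono fun y => mul_le_mul_right (inner y) _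
    _ = (∫⁻ y, f₁ y ∂μ) * (L2N μ f₂ * L2N μ f₃) := lintegral_mul_const _ h₁
    _ ≤ ((μ S) ^ ((1:ℝ)/2) * L2N μ f₁) * (L2N μ f₂ * L2N μ f₃) := by
        gcongr
        exact lintegral_le_sqrt_mul_L2N μ h₁ hS hs
    _ = (μ S) ^ ((1:ℝ)/2) * (L2N μ f₁ * L2N μ f₂ * L2N μ f₃) := by ring

include hA hR h₁ h₂ h₃ in
lemma tri2 {S : Set G} (hS : MeasurableSet S) (hs : ∀ x, x ∉ S → f₂ x = 0) :
    ∫⁻ x, (∫⁻ y, f₁ y * f₂ (x - y) ∂μ) * f₃ x ∂μ ≤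
      (μ S) ^ ((1:ℝ)/2) * (L2N μ f₁ * L2N μ f₂ * L2N μ f₃) := by
  rw [tri_swap μ h₁ h₂ h₃]
  have hsub : ∀ y, (∫⁻ x, f₂ (x - y) * f₃ x ∂μ) = ∫⁻ z, f₂ z * f₃ (z + y) ∂μ := by
    intro y
    have hg : Measurable fun z => f₂ z * f₃ (z + y) :=
      h₂.mul (h₃.comp (measurable_id.add measurable_const))
    have h0 := (hR y).lintegral_comp hg
    calc ∫⁻ x, f₂ (x - y) * f₃ x ∂μ = ∫⁻ x, f₂ (x - y) * f₃ (x - y + y) ∂μ := by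
          simp_rw [sub_add_cancel]
      _ = ∫⁻ z, f₂ z * f₃ (z + y) ∂μ := h0
  simp_rw [hsub]
  calc ∫⁻ y, f₁ y * (∫⁻ z, f₂ z * f₃ (z + y) ∂μ) ∂μ
      = ∫⁻ y, ∫⁻ z, f₂ z * (f₁ y * f₃ (z + y)) ∂μ ∂μ := by
        refine lintegral_congr fun y => ?_
        rw [← lintegral_const_mul (f₁ y)
          (show Measurable fun z => f₂ z * f₃ (z + y) from
            h₂.mul (h₃.comp (measurable_id.add measurable_const)))]
        exact lintegral_congr fun z => by ring
    _ = ∫⁻ z, ∫⁻ y, f₂ z * (f₁ y * f₃ (z + y)) ∂μ ∂μ := by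
        refine lintegral_lintegral_swap ?_
        exact (((h₂.comp measurable_snd).mul ((h₁.comp measurable_fst).mul
          (h₃.comp (measurable_snd.add measurable_fst))))).aemeasurable
    _ = ∫⁻ z, f₂ z * ∫⁻ y, f₁ y * f₃ (z + y) ∂μ ∂μ := by
        refine lintegral_congr fun z => ?_
        exact lintegral_const_mul (f₂ z)
          (show Measurable fun y => f₁ y * f₃ (z + y) from
            h₁.mul (h₃.comp (measurable_const.add measurable_id)))
    _ ≤ ∫⁻ z, f₂ z * (L2N μ f₁ * L2N μ f₃) ∂μ := by
        refine lintegral_mono fun z => mul_le_mul_right ?_ _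
        have hc : Measurable fun y => f₃ (z + y) := h₃.comp (measurable_const.add measurable_id)
        refine (csL2 μ h₁.aemeasurable hc.aemeasurable).trans ?_
        rw [L2N_comp (hA z) h₃]
    _ = (∫⁻ z, f₂ z ∂μ) * (L2N μ f₁ * L2N μ f₃) := lintegral_mul_const _ h₂
    _ ≤ ((μ S) ^ ((1:ℝ)/2) * L2N μ f₂) * (L2N μ f₁ * L2N μ f₃) := by
        gcongr
        exact lintegral_le_sqrt_mul_L2N μ h₂ hS hs
    _ = (μ S) ^ ((1:ℝ)/2) * (L2N μ f₁ * L2N μ f₂ * L2N μ f₃) := by ring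

include hA hL hR h₁ h₂ h₃ in
lemma tri_min {S₁ S₂ S₃ : Set G} (hS₁ : MeasurableSet S₁) (hS₂ : MeasurableSet S₂)
    (hS₃ : MeasurableSet S₃) (hs₁ : ∀ x, x ∉ S₁ → f₁ x = 0)
    (hs₂ : ∀ x, x ∉ S₂ → f₂ x = 0) (hs₃ : ∀ x, x ∉ S₃ → f₃ x = 0) :
    ∫⁻ x, (∫⁻ y, f₁ y * f₂ (x - y) ∂μ) * f₃ x ∂μ ≤
      (min (μ S₁) (min (μ S₂) (μ S₃))) ^ ((1:ℝ)/2) *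
        (L2N μ f₁ * L2N μ f₂ * L2N μ f₃) := by
  rcases le_total (μ S₂) (μ S₃) with h23 | h23
  · rcases le_total (μ S₁) (μ S₂) with h12 | h12
    · rw [min_eq_left h23, min_eq_left h12]
      exact tri1 μ hR h₁ h₂ h₃ hS₁ hs₁
    · rw [min_eq_left h23, min_eq_right h12]
      exact tri2 μ hA hR h₁ h₂ h₃ hS₂ hs₂
  · rcases le_total (μ S₁) (μ S₃) with h13 | h13
    · rw [min_eq_right h23, min_eq_left h13]
      exact tri1 μ hR h₁ h₂ h₃ hS₁ hs₁
    · rw [min_eq_right h23, min_eq_right h13]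
      exact tri3 μ hL h₁ h₂ h₃ hS₃ hs₃

end Tri

end Abstract

noncomputable section App
open scoped ENNReal
open MeasureTheory

local notation "μc" => (Measure.count : Measure (ℤ × ℤ))

instance : SFinite μc := inferInstanceAs (SFinite (Measure.sum Measure.dirac))
instance : MeasurableSub₂ (ℤ × ℤ) := ⟨.of_discrete⟩
instance : MeasurableAdd₂ (ℤ × ℤ) := ⟨.of_discrete⟩

lemma mp_count (φ : (ℤ×ℤ) → (ℤ×ℤ)) (hφ : Function.Bijective φ) :
    MeasurePreserving φ μc μc := by
  refine ⟨.of_discrete, ?_⟩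
  ext s hs
  rw [Measure.map_apply .of_discrete hs]
  have h : φ ⁻¹' s = (Equiv.ofBijective φ hφ).symm '' s := by
    rw [Equiv.image_eq_preimage_symm]; rfl
  rw [h, Measure.count_injective_image (Equiv.ofBijective φ hφ).symm.injective]

lemma ae_count_all {P : (ℤ×ℤ) → Prop} (h : ∀ᵐ x ∂μc, P x) : ∀ x, P x := by
  have h2 : μc {x | ¬ P x} = 0 := by simpa [ae_iff] using h
  have h3 := Measure.count_eq_zero_iff.mp h2
  intro x; by_contra hx
  exact absurd (Set.eq_empty_iff_forall_notMem.mp h3 x) (by simpa using hx)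

end App

noncomputable section App2
open scoped ENNReal
open MeasureTheory

def AnnZ (k : ℕ) : Set (ℤ × ℤ) :=
  {ζ | Real.sqrt (((ζ.1 : ℝ)) ^ 2 + ((ζ.2 : ℝ)) ^ 2) < (2:ℝ) ^ (k : ℤ)}

lemma measurableSet_DZ (k j : ℕ) : MeasurableSet (DZ k j) := by
  have h1 : Measurable fun p : (ℤ×ℤ)×ℝ => |p.2 - omegaZK p.1| :=
    (measurable_snd.sub ((Measurable.of_discrete (f := omegaZK)).comp measurable_fst)).abs
  have : DZ k j = (Prod.fst ⁻¹' {ζ : ℤ×ℤ |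
      (2:ℝ) ^ ((k : ℤ) - 1) ≤ Real.sqrt (((ζ.1 : ℝ)) ^ 2 + ((ζ.2 : ℝ)) ^ 2) ∧
      Real.sqrt (((ζ.1 : ℝ)) ^ 2 + ((ζ.2 : ℝ)) ^ 2) < (2:ℝ) ^ (k : ℤ)}) ∩
      ((fun p : (ℤ×ℤ)×ℝ => |p.2 - omegaZK p.1|) ⁻¹' Set.Iic ((2:ℝ) ^ (j : ℤ))) := by
    ext p; simp only [DZ, Set.mem_setOf_eq, Set.mem_inter_iff, Set.mem_preimage,
      Set.mem_Iic]; tauto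
  rw [this]
  exact (measurable_fst (MeasurableSet.of_discrete)).inter (h1 measurableSet_Iic)

lemma exists_good_rep (k j : ℕ) (f : (ℤ×ℤ)×ℝ → ℝ) (hpos : ∀ p, 0 ≤ f p)
    (hf : MemLp f 2 muZ) (hsupp : Function.support f ⊆ DZ k j) :
    ∃ g : (ℤ×ℤ)×ℝ → ℝ, Measurable g ∧ (∀ p, 0 ≤ g p) ∧
      Function.support g ⊆ DZ k j ∧ g =ᵐ[muZ] f := by
  obtain ⟨f', hf'meas, hf'ae⟩ := hf.aestronglyMeasurable
  refine ⟨(DZ k j).indicator (fun p => max (f' p) 0), ?_, ?_, ?_, ?_⟩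
  · exact (hf'meas.measurable.max measurable_const).indicator (measurableSet_DZ k j)
  · intro p
    by_cases hp : p ∈ DZ k j <;> simp [hp, le_max_right]
  · intro p hp
    by_contra hnp
    simp only [Function.mem_support, Set.indicator_of_notMem hnp, ne_eq,
      not_true_eq_false] at hp
  · filter_upwards [hf'ae] with p hp
    by_cases hd : p ∈ DZ k j
    · simp [Set.indicator_of_mem hd, ← hp, max_eq_left (hpos p)]
    · have : f p = 0 := by
        by_contra h0
        exact hd (hsupp (by simpa [Function.mem_support] using h0))
      simp [Set.indicator_of_notMem hd, this]

end App2

noncomputable section App3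
open scoped ENNReal
open MeasureTheory

lemma slice_ae {f g : (ℤ×ℤ)×ℝ → ℝ} (h : g =ᵐ[muZ] f) :
    ∀ ζ : ℤ×ℤ, (fun τ => g (ζ, τ)) =ᵐ[volume] (fun τ => f (ζ, τ)) := by
  have h' : g =ᵐ[(Measure.count : Measure (ℤ×ℤ)).prod volume] f := h
  exact ae_count_all (Measure.ae_ae_of_ae_prod h')

lemma convZ_congr {f₁ g₁ f₂ g₂ : (ℤ×ℤ)×ℝ → ℝ} (h1 : g₁ =ᵐ[muZ] f₁) (h2 : g₂ =ᵐ[muZ] f₂) :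
    convZ f₁ f₂ = convZ g₁ g₂ := by
  funext p
  unfold convZ
  refine tsum_congr fun ζ => ?_
  refine lintegral_congr_ae ?_
  have ha : (fun τ' => ENNReal.ofReal (f₁ (ζ, τ'))) =ᵐ[volume]
      (fun τ' => ENNReal.ofReal (g₁ (ζ, τ'))) := by
    filter_upwards [slice_ae h1 ζ] with τ hτ
    rw [hτ]
  have hb : (fun τ' => ENNReal.ofReal (f₂ (p.1 - ζ, p.2 - τ'))) =ᵐ[volume]
      (fun τ' => ENNReal.ofReal (g₂ (p.1 - ζ, p.2 - τ'))) := by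
    have hS : volume {τ | ¬ g₂ (p.1 - ζ, τ) = f₂ (p.1 - ζ, τ)} = 0 := by
      simpa [Filter.EventuallyEq, ae_iff] using slice_ae h2 (p.1 - ζ)
    have hpre := (Measure.measurePreserving_sub_left volume p.2).quasiMeasurePreserving.preimage_null hS
    rw [Filter.eventuallyEq_iff_exists_mem]
    refine ⟨{τ' | g₂ (p.1 - ζ, p.2 - τ') = f₂ (p.1 - ζ, p.2 - τ')}, ?_, fun τ' hτ' => by
      simp only [Set.mem_setOf_eq] at hτ'; dsimp only; rw [hτ']⟩
    rw [mem_ae_iff]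
    simpa [Set.preimage, Set.compl_setOf] using hpre
  exact ha.mul hb

lemma mem_AnnZ_of_mem_DZ {k j : ℕ} {p : (ℤ×ℤ)×ℝ} (hp : p ∈ DZ k j) : p.1 ∈ AnnZ k := hp.2.1

lemma tau_bound_of_mem_DZ {k j : ℕ} {ζ : ℤ×ℤ} {τ : ℝ} (hp : (ζ, τ) ∈ DZ k j) :
    τ ∈ Set.Icc (omegaZK ζ - 2^(j:ℤ)) (omegaZK ζ + 2^(j:ℤ)) := by
  have := hp.2.2
  rw [abs_le] at this
  constructor <;> linarith [this.1, this.2]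

lemma count_AnnZ_le (k : ℕ) :
    (Measure.count : Measure (ℤ×ℤ)) (AnnZ k) ≤ ((3 * 2^k : ℕ) : ℝ≥0∞)^(2:ℕ) := by
  have hsub : AnnZ k ⊆ ↑(Finset.Icc (-(2^k) : ℤ) (2^k) ×ˢ Finset.Icc (-(2^k) : ℤ) (2^k)) := by
    intro ζ hζ
    have hs : Real.sqrt (((ζ.1 : ℝ)) ^ 2 + ((ζ.2 : ℝ)) ^ 2) < (2:ℝ) ^ (k : ℤ) := hζ
    have h2 : (2:ℝ) ^ (k:ℤ) = ((2^k : ℤ) : ℝ) := by push_cast [zpow_natCast]; ring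
    have hb1 : |(ζ.1 : ℝ)| < (2:ℝ)^(k:ℤ) := by
      refine lt_of_le_of_lt ?_ hs
      rw [← Real.sqrt_sq_eq_abs]
      exact Real.sqrt_le_sqrt (by nlinarith [sq_nonneg (ζ.2 : ℝ)])
    have hb2 : |(ζ.2 : ℝ)| < (2:ℝ)^(k:ℤ) := by
      refine lt_of_le_of_lt ?_ hs
      rw [← Real.sqrt_sq_eq_abs]
      exact Real.sqrt_le_sqrt (by nlinarith [sq_nonneg (ζ.1 : ℝ)])
    rw [h2] at hb1 hb2
    have hb1' : |ζ.1| ≤ 2^k := by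
      have h := hb1.le
      rw [← Int.cast_abs] at h
      exact_mod_cast h
    have hb2' : |ζ.2| ≤ 2^k := by
      have h := hb2.le
      rw [← Int.cast_abs] at h
      exact_mod_cast h
    simp only [Finset.coe_product, Set.mem_prod, Finset.mem_coe, Finset.mem_Icc]
    rw [abs_le] at hb1' hb2'
    exact ⟨⟨hb1'.1, hb1'.2⟩, ⟨hb2'.1, hb2'.2⟩⟩
  calc (Measure.count : Measure (ℤ×ℤ)) (AnnZ k)
      ≤ Measure.count ↑(Finset.Icc (-(2^k) : ℤ) (2^k) ×ˢ Finset.Icc (-(2^k) : ℤ) (2^k)) :=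
        measure_mono hsub
    _ = ((Finset.Icc (-(2^k) : ℤ) (2^k) ×ˢ Finset.Icc (-(2^k) : ℤ) (2^k)).card : ℝ≥0∞) :=
        Measure.count_apply_finset _
    _ ≤ ((3 * 2^k : ℕ) : ℝ≥0∞)^(2:ℕ) := by
        rw [Finset.card_product, Int.card_Icc]
        have h1 : ((2:ℤ)^k + 1 - -(2:ℤ)^k) = ((2*2^k+1 : ℕ) : ℤ) := by push_cast; ring
        rw [h1, Int.toNat_natCast]
        have hle : (2 * 2^k + 1 : ℕ) ≤ 3 * 2^k := by
          have := Nat.one_le_two_pow (n := k); omega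
        have hmul : (2*2^k+1) * (2*2^k+1) ≤ (3*2^k) * (3*2^k) := Nat.mul_le_mul hle hle
        calc (((2*2^k+1) * (2*2^k+1) : ℕ) : ℝ≥0∞) ≤ (((3*2^k) * (3*2^k) : ℕ) : ℝ≥0∞) := by
              exact_mod_cast Nat.cast_le.mpr hmul
          _ = ((3 * 2^k : ℕ) : ℝ≥0∞)^(2:ℕ) := by push_cast; ring
end App3

noncomputable section App4
open scoped ENNReal
open MeasureTheory

def GG (g : (ℤ×ℤ)×ℝ → ℝ) : (ℤ×ℤ) → ℝ≥0∞ :=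
  fun ζ => L2N volume (fun τ => ENNReal.ofReal (g (ζ, τ)))

lemma GG_support {g : (ℤ×ℤ)×ℝ → ℝ} {k j : ℕ} (hsup : Function.support g ⊆ DZ k j) :
    ∀ ζ, ζ ∉ AnnZ k → GG g ζ = 0 := by
  intro ζ hζ
  have hg : ∀ τ, g (ζ, τ) = 0 := by
    intro τ
    by_contra h0
    have hp : (ζ, τ) ∈ Function.support g := h0
    exact hζ ((hsup hp).2.1)
  unfold GG L2N
  have hz : ∀ τ : ℝ, ENNReal.ofReal (g (ζ, τ)) ^ (2:ℝ) = 0 := by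
    intro τ
    rw [hg τ]
    simp [ENNReal.zero_rpow_of_pos]
  simp_rw [hz]
  simp [ENNReal.zero_rpow_of_pos]

lemma rpow_half_sq (x : ℝ≥0∞) : (x ^ ((1:ℝ)/2)) ^ (2:ℝ) = x := by
  rw [← ENNReal.rpow_mul]; norm_num

lemma GG_eLp (g : (ℤ×ℤ)×ℝ → ℝ) (hm : Measurable g) (hpos : ∀ p, 0 ≤ g p) :
    L2N (Measure.count : Measure (ℤ×ℤ)) (GG g) = eLpNorm g 2 muZ := by
  have hmm : Measurable fun p : (ℤ×ℤ)×ℝ => (ENNReal.ofReal (g p)) ^ (2:ℝ) :=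
    (ENNReal.measurable_ofReal.comp hm).pow_const _
  have h1 : L2N (Measure.count : Measure (ℤ×ℤ)) (GG g)
      = (∑' ζ : ℤ×ℤ, ∫⁻ τ, (ENNReal.ofReal (g (ζ, τ))) ^ (2:ℝ) ∂volume) ^ ((1:ℝ)/2) := by
    rw [L2N, lintegral_count]
    congr 1
    refine tsum_congr fun ζ => ?_
    rw [GG, L2N, rpow_half_sq]
  have h2 : eLpNorm g 2 muZ = (∫⁻ p, (ENNReal.ofReal (g p)) ^ (2:ℝ) ∂muZ) ^ ((1:ℝ)/2) := by
    rw [eLpNorm_eq_lintegral_rpow_enorm_toReal (by norm_num) (by norm_num)]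
    have ht : (2:ℝ≥0∞).toReal = (2:ℝ) := by norm_num
    rw [ht]
    congr 1
    refine lintegral_congr fun p => ?_
    rw [Real.enorm_eq_ofReal (hpos p)]
  rw [h1, h2, show muZ = (Measure.count : Measure (ℤ×ℤ)).prod volume from rfl,
    lintegral_prod _ hmm.aemeasurable, lintegral_count]
end App4

noncomputable section App5
open scoped ENNReal
open MeasureTheory

set_option maxHeartbeats 1000000 in
lemma main_meas (k₁ k₂ k₃ j₁ j₂ j₃ : ℕ) (g₁ g₂ g₃ : (ℤ×ℤ)×ℝ → ℝ)
    (m₁ : Measurable g₁) (m₂ : Measurable g₂) (m₃ : Measurable g₃)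
    (sup₁ : Function.support g₁ ⊆ DZ k₁ j₁)
    (sup₂ : Function.support g₂ ⊆ DZ k₂ j₂)
    (sup₃ : Function.support g₃ ⊆ DZ k₃ j₃) :
    ∫⁻ p, convZ g₁ g₂ p * ENNReal.ofReal (g₃ p) ∂muZ ≤
      (ENNReal.ofReal (2 * 2^(((min j₁ (min j₂ j₃) : ℕ)):ℤ)))^((1:ℝ)/2) *
        ((3 * 2^(min k₁ (min k₂ k₃)) : ℕ) : ℝ≥0∞) *
        (L2N (Measure.count : Measure (ℤ×ℤ)) (GG g₁) *
          L2N (Measure.count : Measure (ℤ×ℤ)) (GG g₂) *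
          L2N (Measure.count : Measure (ℤ×ℤ)) (GG g₃)) := by
  set jm := min j₁ (min j₂ j₃) with hjm
  set km := min k₁ (min k₂ k₃) with hkm
  set Mj : ℝ≥0∞ := min (ENNReal.ofReal (2 * 2^(j₁:ℤ)))
    (min (ENNReal.ofReal (2 * 2^(j₂:ℤ))) (ENNReal.ofReal (2 * 2^(j₃:ℤ)))) with hMj
  have mF₁ : Measurable fun p : (ℤ×ℤ)×ℝ => ENNReal.ofReal (g₁ p) :=
    ENNReal.measurable_ofReal.comp m₁
  have mF₂ : Measurable fun p : (ℤ×ℤ)×ℝ => ENNReal.ofReal (g₂ p) :=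
    ENNReal.measurable_ofReal.comp m₂
  have mF₃ : Measurable fun p : (ℤ×ℤ)×ℝ => ENNReal.ofReal (g₃ p) :=
    ENNReal.measurable_ofReal.comp m₃
  -- measurability of the inner 1D convolution, for fixed frequencies
  have mI : ∀ w z : ℤ×ℤ, Measurable fun τ : ℝ =>
      ∫⁻ τ', ENNReal.ofReal (g₁ (w, τ')) * ENNReal.ofReal (g₂ (z, τ - τ')) ∂volume := by
    intro w z
    exact Measurable.lintegral_prod_right'
      (f := fun q : ℝ × ℝ => ENNReal.ofReal (g₁ (w, q.2)) * ENNReal.ofReal (g₂ (z, q.1 - q.2)))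
      ((mF₁.comp (measurable_const.prodMk measurable_snd)).mul
        (mF₂.comp (measurable_const.prodMk (measurable_fst.sub measurable_snd))))
  -- measurability of convZ g₁ g₂
  have mconv : Measurable (convZ g₁ g₂) := by
    have hsw : Measurable fun q : ℝ × (ℤ×ℤ) => convZ g₁ g₂ (q.2, q.1) := by
      refine measurable_from_prod_countable_left fun ζ => ?_
      refine Measurable.ennreal_tsum fun ζ' => ?_
      exact mI ζ' (ζ - ζ')
    have := hsw.comp (measurable_swap : Measurable (Prod.swap : (ℤ×ℤ)×ℝ → ℝ×(ℤ×ℤ)))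
    exact this
  -- 1D measure preserving maps
  have hAr : ∀ z : ℝ, MeasurePreserving (fun y => z + y) volume volume :=
    fun z => measurePreserving_add_left volume z
  have hLr : ∀ x : ℝ, MeasurePreserving (fun y => x - y) volume volume :=
    fun x => Measure.measurePreserving_sub_left volume x
  have hRr : ∀ y : ℝ, MeasurePreserving (fun x => x - y) volume volume :=
    fun y => measurePreserving_sub_right volume y
  -- key 1D estimate
  have key : ∀ ζ ζ' : ℤ×ℤ,
      (∫⁻ τ, (∫⁻ τ', ENNReal.ofReal (g₁ (ζ', τ')) *
          ENNReal.ofReal (g₂ (ζ - ζ', τ - τ')) ∂volume) *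
        ENNReal.ofReal (g₃ (ζ, τ)) ∂volume) ≤
      Mj^((1:ℝ)/2) * (GG g₁ ζ' * GG g₂ (ζ - ζ') * GG g₃ ζ) := by
    intro ζ ζ'
    have ma : Measurable fun τ => ENNReal.ofReal (g₁ (ζ', τ)) :=
      mF₁.comp measurable_prodMk_left
    have mb : Measurable fun τ => ENNReal.ofReal (g₂ (ζ - ζ', τ)) :=
      mF₂.comp measurable_prodMk_left
    have mc : Measurable fun τ => ENNReal.ofReal (g₃ (ζ, τ)) :=
      mF₃.comp measurable_prodMk_left
    have hs1 : ∀ τ, τ ∉ Set.Icc (omegaZK ζ' - 2^(j₁:ℤ)) (omegaZK ζ' + 2^(j₁:ℤ)) →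
        ENNReal.ofReal (g₁ (ζ', τ)) = 0 := by
      intro τ hτ
      have : g₁ (ζ', τ) = 0 := by
        by_contra h0
        have hp : ((ζ'), τ) ∈ Function.support g₁ := h0
        exact hτ (tau_bound_of_mem_DZ (sup₁ hp))
      simp [this]
    have hs2 : ∀ τ, τ ∉ Set.Icc (omegaZK (ζ - ζ') - 2^(j₂:ℤ)) (omegaZK (ζ - ζ') + 2^(j₂:ℤ)) →
        ENNReal.ofReal (g₂ (ζ - ζ', τ)) = 0 := by
      intro τ hτ
      have : g₂ (ζ - ζ', τ) = 0 := by
        by_contra h0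
        have hp : ((ζ - ζ'), τ) ∈ Function.support g₂ := h0
        exact hτ (tau_bound_of_mem_DZ (sup₂ hp))
      simp [this]
    have hs3 : ∀ τ, τ ∉ Set.Icc (omegaZK ζ - 2^(j₃:ℤ)) (omegaZK ζ + 2^(j₃:ℤ)) →
        ENNReal.ofReal (g₃ (ζ, τ)) = 0 := by
      intro τ hτ
      have : g₃ (ζ, τ) = 0 := by
        by_contra h0
        have hp : ((ζ), τ) ∈ Function.support g₃ := h0
        exact hτ (tau_bound_of_mem_DZ (sup₃ hp))
      simp [this]
    have h := tri_min volume hAr hLr hRr ma mb mc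
      measurableSet_Icc measurableSet_Icc measurableSet_Icc hs1 hs2 hs3
    have hvol : ∀ (c r : ℝ), volume (Set.Icc (c - r) (c + r)) = ENNReal.ofReal (2 * r) := by
      intro c r
      rw [Real.volume_Icc]
      congr 1
      ring
    rw [hvol, hvol, hvol] at h
    exact h
  -- main chain
  calc ∫⁻ p, convZ g₁ g₂ p * ENNReal.ofReal (g₃ p) ∂muZ
      = ∑' ζ : ℤ×ℤ, ∫⁻ τ, convZ g₁ g₂ (ζ, τ) * ENNReal.ofReal (g₃ (ζ, τ)) ∂volume := by
        rw [show muZ = (Measure.count : Measure (ℤ×ℤ)).prod volume from rfl,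
          lintegral_prod (fun p => convZ g₁ g₂ p * ENNReal.ofReal (g₃ p)) (mconv.mul mF₃).aemeasurable, lintegral_count]
    _ = ∑' ζ : ℤ×ℤ, ∑' ζ' : ℤ×ℤ, ∫⁻ τ,
          (∫⁻ τ', ENNReal.ofReal (g₁ (ζ', τ')) *
            ENNReal.ofReal (g₂ (ζ - ζ', τ - τ')) ∂volume) *
          ENNReal.ofReal (g₃ (ζ, τ)) ∂volume := by
        refine tsum_congr fun ζ => ?_
        have hconv : ∀ τ : ℝ, convZ g₁ g₂ (ζ, τ) = ∑' ζ' : ℤ×ℤ,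
            ∫⁻ τ', ENNReal.ofReal (g₁ (ζ', τ')) *
              ENNReal.ofReal (g₂ (ζ - ζ', τ - τ')) ∂volume := fun τ => rfl
        simp_rw [hconv, ← ENNReal.tsum_mul_right]
        exact lintegral_tsum fun ζ' => ((mI ζ' (ζ - ζ')).mul
          (mF₃.comp measurable_prodMk_left)).aemeasurable
    _ ≤ ∑' ζ : ℤ×ℤ, ∑' ζ' : ℤ×ℤ, Mj^((1:ℝ)/2) * (GG g₁ ζ' * GG g₂ (ζ - ζ') * GG g₃ ζ) := by
        exact ENNReal.tsum_le_tsum fun ζ => ENNReal.tsum_le_tsum fun ζ' => key ζ ζ'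
    _ = Mj^((1:ℝ)/2) * ∑' ζ : ℤ×ℤ,
          (∑' ζ' : ℤ×ℤ, GG g₁ ζ' * GG g₂ (ζ - ζ')) * GG g₃ ζ := by
        have hin : ∀ ζ : ℤ×ℤ, (∑' ζ' : ℤ×ℤ, Mj^((1:ℝ)/2) *
            (GG g₁ ζ' * GG g₂ (ζ - ζ') * GG g₃ ζ))
            = Mj^((1:ℝ)/2) * ((∑' ζ' : ℤ×ℤ, GG g₁ ζ' * GG g₂ (ζ - ζ')) * GG g₃ ζ) := by
          intro ζ
          rw [ENNReal.tsum_mul_left]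
          congr 1
          exact ENNReal.tsum_mul_right
        simp_rw [hin]
        exact ENNReal.tsum_mul_left
    _ = Mj^((1:ℝ)/2) * ∫⁻ ζ, (∫⁻ ζ', GG g₁ ζ' * GG g₂ (ζ - ζ')
          ∂(Measure.count : Measure (ℤ×ℤ))) * GG g₃ ζ
          ∂(Measure.count : Measure (ℤ×ℤ)) := by
        congr 1
        rw [lintegral_count]
        refine tsum_congr fun ζ => ?_
        rw [lintegral_count]
    _ ≤ Mj^((1:ℝ)/2) * ((min ((Measure.count : Measure (ℤ×ℤ)) (AnnZ k₁))
          (min ((Measure.count : Measure (ℤ×ℤ)) (AnnZ k₂))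
            ((Measure.count : Measure (ℤ×ℤ)) (AnnZ k₃))))^((1:ℝ)/2) *
          (L2N (Measure.count : Measure (ℤ×ℤ)) (GG g₁) *
            L2N (Measure.count : Measure (ℤ×ℤ)) (GG g₂) *
            L2N (Measure.count : Measure (ℤ×ℤ)) (GG g₃))) := by
        gcongr
        exact tri_min (Measure.count : Measure (ℤ×ℤ))
          (fun z => mp_count _ (Equiv.addLeft z).bijective)
          (fun x => mp_count _ (Equiv.subLeft x).bijective)
          (fun y => mp_count _ (Equiv.subRight y).bijective)
          .of_discrete .of_discrete .of_discrete
          .of_discrete .of_discrete .of_discrete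
          (GG_support sup₁) (GG_support sup₂) (GG_support sup₃)
    _ ≤ (ENNReal.ofReal (2 * 2^((jm:ℕ):ℤ)))^((1:ℝ)/2) *
          ((3 * 2^km : ℕ) : ℝ≥0∞) *
          (L2N (Measure.count : Measure (ℤ×ℤ)) (GG g₁) *
            L2N (Measure.count : Measure (ℤ×ℤ)) (GG g₂) *
            L2N (Measure.count : Measure (ℤ×ℤ)) (GG g₃)) := by
        have hMjle : Mj^((1:ℝ)/2) ≤ (ENNReal.ofReal (2 * 2^((jm:ℕ):ℤ)))^((1:ℝ)/2) := by
          refine ENNReal.rpow_le_rpow ?_ (by norm_num)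
          have hcase : jm = j₁ ∨ jm = j₂ ∨ jm = j₃ := by omega
          rcases hcase with h | h | h <;> rw [hMj, h]
          · exact min_le_left _ _
          · exact le_trans (min_le_right _ _) (min_le_left _ _)
          · exact le_trans (min_le_right _ _) (min_le_right _ _)
        have hbound : ∀ k : ℕ, ((Measure.count : Measure (ℤ×ℤ)) (AnnZ k))^((1:ℝ)/2) ≤
            ((3 * 2^k : ℕ) : ℝ≥0∞) := by
          intro k
          calc ((Measure.count : Measure (ℤ×ℤ)) (AnnZ k))^((1:ℝ)/2)
              ≤ (((3 * 2^k : ℕ) : ℝ≥0∞)^(2:ℕ))^((1:ℝ)/2) :=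
                ENNReal.rpow_le_rpow (count_AnnZ_le k) (by norm_num)
            _ = ((3 * 2^k : ℕ) : ℝ≥0∞) := by
                rw [← ENNReal.rpow_natCast _ 2, ← ENNReal.rpow_mul]
                norm_num
        have hCnt : (min ((Measure.count : Measure (ℤ×ℤ)) (AnnZ k₁))
            (min ((Measure.count : Measure (ℤ×ℤ)) (AnnZ k₂))
              ((Measure.count : Measure (ℤ×ℤ)) (AnnZ k₃))))^((1:ℝ)/2) ≤
            ((3 * 2^km : ℕ) : ℝ≥0∞) := by
          have hcase : km = k₁ ∨ km = k₂ ∨ km = k₃ := by omega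
          rcases hcase with h | h | h <;> rw [h]
          · exact le_trans (ENNReal.rpow_le_rpow (min_le_left _ _) (by norm_num)) (hbound k₁)
          · exact le_trans (ENNReal.rpow_le_rpow
              (le_trans (min_le_right _ _) (min_le_left _ _)) (by norm_num)) (hbound k₂)
          · exact le_trans (ENNReal.rpow_le_rpow
              (le_trans (min_le_right _ _) (min_le_right _ _)) (by norm_num)) (hbound k₃)
        calc Mj^((1:ℝ)/2) * ((min ((Measure.count : Measure (ℤ×ℤ)) (AnnZ k₁))
            (min ((Measure.count : Measure (ℤ×ℤ)) (AnnZ k₂))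
              ((Measure.count : Measure (ℤ×ℤ)) (AnnZ k₃))))^((1:ℝ)/2) *
            (L2N (Measure.count : Measure (ℤ×ℤ)) (GG g₁) *
              L2N (Measure.count : Measure (ℤ×ℤ)) (GG g₂) *
              L2N (Measure.count : Measure (ℤ×ℤ)) (GG g₃)))
            = (Mj^((1:ℝ)/2) * (min ((Measure.count : Measure (ℤ×ℤ)) (AnnZ k₁))
              (min ((Measure.count : Measure (ℤ×ℤ)) (AnnZ k₂))
                ((Measure.count : Measure (ℤ×ℤ)) (AnnZ k₃))))^((1:ℝ)/2)) *
              (L2N (Measure.count : Measure (ℤ×ℤ)) (GG g₁) *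
                L2N (Measure.count : Measure (ℤ×ℤ)) (GG g₂) *
                L2N (Measure.count : Measure (ℤ×ℤ)) (GG g₃)) := by
              ring
          _ ≤ _ := mul_le_mul' (mul_le_mul' hMjle hCnt) le_rfl
end App5

noncomputable section App6
open scoped ENNReal
open MeasureTheory

lemma const_bound (jm km : ℕ) :
    (ENNReal.ofReal (2 * 2^((jm:ℕ):ℤ)))^((1:ℝ)/2) * ((3 * 2^km : ℕ) : ℝ≥0∞) ≤
      ENNReal.ofReal (5 * (2:ℝ)^km * (2:ℝ)^((jm:ℝ)/2)) := by
  rw [ENNReal.ofReal_rpow_of_pos (by positivity), ← ENNReal.ofReal_natCast,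
    ← ENNReal.ofReal_mul (by positivity)]
  refine ENNReal.ofReal_le_ofReal ?_
  have h2 : ((2:ℝ) ^ (jm:ℤ)) = (2:ℝ) ^ ((jm:ℝ)) := by
    rw [← Real.rpow_intCast 2 (jm:ℤ)]
    norm_num
  rw [h2]
  have h3 : (2 * (2:ℝ)^((jm:ℝ)))^((1:ℝ)/2)
      = (2:ℝ)^((1:ℝ)/2) * (2:ℝ)^((jm:ℝ)/2) := by
    rw [Real.mul_rpow (by norm_num) (Real.rpow_nonneg (by norm_num) _),
      ← Real.rpow_mul (by norm_num)]
    congr 1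
    ring
  rw [h3]
  have hc : ((3 * 2^km : ℕ) : ℝ) = 3 * (2:ℝ)^km := by push_cast; ring
  rw [hc]
  have hs : (2:ℝ)^((1:ℝ)/2) ≤ 1.5 := by
    have hsq : ((2:ℝ)^((1:ℝ)/2))^(2:ℕ) = 2 := by
      rw [← Real.rpow_natCast ((2:ℝ)^((1:ℝ)/2)) 2, ← Real.rpow_mul (by norm_num)]
      norm_num
    nlinarith [Real.rpow_nonneg (show (0:ℝ) ≤ 2 by norm_num) ((1:ℝ)/2)]
  have hj : (0:ℝ) < (2:ℝ)^((jm:ℝ)/2) := Real.rpow_pos_of_pos (by norm_num) _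
  have hk : (0:ℝ) < (2:ℝ)^km := by positivity
  nlinarith [mul_pos hj hk]


end App6

/-- Cauchy-Schwarz bilinear convolution estimate for modulation-localized
functions: `∫ (f₁ * f₂) f₃ ≲ 2^{k_min} 2^{j_min/2} ∏ᵢ ‖fᵢ‖_{L²}`, where
`k_min = min(k₁,k₂,k₃)` and `j_min = min(j₁,j₂,j₃)`. -/
theorem cauchy_schwarz_bilinear_estimate :
    ∃ C > 0, ∀ (k₁ k₂ k₃ j₁ j₂ j₃ : ℕ) (f₁ f₂ f₃ : (ℤ × ℤ) × ℝ → ℝ),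
      (∀ p, 0 ≤ f₁ p) → (∀ p, 0 ≤ f₂ p) → (∀ p, 0 ≤ f₃ p) →
      MemLp f₁ 2 muZ → MemLp f₂ 2 muZ → MemLp f₃ 2 muZ →
      Function.support f₁ ⊆ DZ k₁ j₁ →
      Function.support f₂ ⊆ DZ k₂ j₂ →
      Function.support f₃ ⊆ DZ k₃ j₃ →
      ∫⁻ p, convZ f₁ f₂ p * ENNReal.ofReal (f₃ p) ∂muZ ≤
        ENNReal.ofReal (C * (2:ℝ) ^ (min k₁ (min k₂ k₃)) *
            (2:ℝ) ^ (((min j₁ (min j₂ j₃) : ℕ) : ℝ)/2)) *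
          (eLpNorm f₁ 2 muZ * eLpNorm f₂ 2 muZ * eLpNorm f₃ 2 muZ) := by
  refine ⟨5, by norm_num, ?_⟩
  intro k₁ k₂ k₃ j₁ j₂ j₃ f₁ f₂ f₃ pos₁ pos₂ pos₃ mem₁ mem₂ mem₃ hsup₁ hsup₂ hsup₃
  obtain ⟨g₁, mg₁, gpos₁, gsup₁, hae₁⟩ := exists_good_rep k₁ j₁ f₁ pos₁ mem₁ hsup₁
  obtain ⟨g₂, mg₂, gpos₂, gsup₂, hae₂⟩ := exists_good_rep k₂ j₂ f₂ pos₂ mem₂ hsup₂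
  obtain ⟨g₃, mg₃, gpos₃, gsup₃, hae₃⟩ := exists_good_rep k₃ j₃ f₃ pos₃ mem₃ hsup₃
  have hLHS : ∫⁻ p, convZ f₁ f₂ p * ENNReal.ofReal (f₃ p) ∂muZ
      = ∫⁻ p, convZ g₁ g₂ p * ENNReal.ofReal (g₃ p) ∂muZ := by
    rw [convZ_congr hae₁ hae₂]
    refine lintegral_congr_ae ?_
    filter_upwards [hae₃] with p hp
    rw [hp]
  rw [hLHS,
    show eLpNorm f₁ 2 muZ = eLpNorm g₁ 2 muZ from (eLpNorm_congr_ae hae₁).symm,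
    show eLpNorm f₂ 2 muZ = eLpNorm g₂ 2 muZ from (eLpNorm_congr_ae hae₂).symm,
    show eLpNorm f₃ 2 muZ = eLpNorm g₃ 2 muZ from (eLpNorm_congr_ae hae₃).symm]
  refine le_trans (main_meas k₁ k₂ k₃ j₁ j₂ j₃ g₁ g₂ g₃ mg₁ mg₂ mg₃ gsup₁ gsup₂ gsup₃) ?_
  rw [GG_eLp g₁ mg₁ gpos₁, GG_eLp g₂ mg₂ gpos₂, GG_eLp g₃ mg₃ gpos₃]
  exact mul_le_mul' (const_bound (min j₁ (min j₂ j₃)) (min k₁ (min k₂ k₃))) le_rfl
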